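/- With I_n = Σ_{a₁+2a₂=n} J₁^{a₁}J₂^{a₂} in k[x₂,x₃], for all n ≥ 1 one has ((I_{n+2} + x₂²I_{n+1}) : x₃^{2q+1}) = I_n + x₂²I_{n-1}. -/

import Mathlib

noncomputable section
open MvPolynomial Pointwise

variable {k : Type*} [Field k]

/-- `J₁ = (x₂², x₂x₃^q, x₃^{q+1})` in `T' = k[x₂,x₃]` (variables `X 0 = x₂`, `X 1 = x₃`). -/
def J1 (k : Type*) [Field k] (q : ℕ) : Ideal (MvPolynomial (Fin 2) k) :=
  Ideal.span {X 0 ^ 2, X 0 * X 1 ^ q, X 1 ^ (q + 1)}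

/-- `J₂ = (x₃^{2q+1})`. -/
def J2 (k : Type*) [Field k] (q : ℕ) : Ideal (MvPolynomial (Fin 2) k) :=
  Ideal.span {X 1 ^ (2 * q + 1)}

/-- `Iₙ = Σ_{a₁+2a₂=n} J₁^{a₁} J₂^{a₂}` (so `I₀ = T'`). -/
def filtI (k : Type*) [Field k] (q n : ℕ) : Ideal (MvPolynomial (Fin 2) k) :=
  ⨆ (a : ℕ × ℕ) (_ : a.1 + 2 * a.2 = n), J1 k q ^ a.1 * J2 k q ^ a.2

/-- for all n ≥ 1,
((I_{n+2} + x₂²I_{n+1}) : x₃^{2q+1}) = Iₙ + x₂²I_{n-1}. -/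
def ee (A B : ℕ) : Fin 2 →₀ ℕ := Finsupp.single 0 A + Finsupp.single 1 B

lemma ee_apply0 (A B : ℕ) : ee A B 0 = A := by simp [ee, Finsupp.single_apply]
lemma ee_apply1 (A B : ℕ) : ee A B 1 = B := by simp [ee, Finsupp.single_apply]
lemma ee_add (A B C D : ℕ) : ee A B + ee C D = ee (A+C) (B+D) := by
  simp [ee, Finsupp.single_add]; abel
lemma ee_le (A B : ℕ) (d : Fin 2 →₀ ℕ) : ee A B ≤ d ↔ A ≤ d 0 ∧ B ≤ d 1 := by
  rw [Finsupp.le_def, Fin.forall_fin_two, ee_apply0, ee_apply1]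

lemma mon1 : (X 0 ^ 2 : MvPolynomial (Fin 2) k) = monomial (ee 2 0) 1 := by
  rw [X_pow_eq_monomial]; congr 1; simp [ee]
lemma mon2 (q : ℕ) : (X 0 * X 1 ^ q : MvPolynomial (Fin 2) k) = monomial (ee 1 q) 1 := by
  rw [X_pow_eq_monomial, X, monomial_mul]; simp [ee]
lemma mon3 (m : ℕ) : (X 1 ^ m : MvPolynomial (Fin 2) k) = monomial (ee 0 m) 1 := by
  rw [X_pow_eq_monomial]; congr 1; simp [ee]

lemma support_mul_mon (p : MvPolynomial (Fin 2) k) (t : Fin 2 →₀ ℕ) :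
    (p * monomial t 1).support = p.support.map (addRightEmbedding t) :=
  AddMonoidAlgebra.support_coeff_mul_single p 1 (by simp) t

def spanM (k : Type*) [Field k] (S : Set (Fin 2 →₀ ℕ)) : Ideal (MvPolynomial (Fin 2) k) :=
  Ideal.span ((fun s => monomial s (1:k)) '' S)

lemma spanM_mul (S T : Set (Fin 2 →₀ ℕ)) : spanM k S * spanM k T = spanM k (S + T) := by
  rw [spanM, spanM, spanM, Ideal.span_mul_span']
  congr 1
  rw [← Set.image2_mul, ← Set.image2_add, Set.image2_image_left, Set.image2_image_right,
    Set.image_image2]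
  apply Set.image2_congr'
  intro s t
  simp [monomial_mul]

lemma spanM_mono {S T : Set (Fin 2 →₀ ℕ)} (h : S ⊆ T) : spanM k S ≤ spanM k T :=
  Ideal.span_mono (Set.image_mono h)

lemma mem_spanM {p : MvPolynomial (Fin 2) k} {S : Set (Fin 2 →₀ ℕ)} :
    p ∈ spanM k S ↔ ∀ d ∈ p.support, ∃ s ∈ S, s ≤ d :=
  mem_ideal_span_monomial_image


/-- exponents of generators of J1^a -/
def G1 (q a : ℕ) : Set (Fin 2 →₀ ℕ) :=
  {s | ∃ i j l, i + j + l = a ∧ s = ee (2*i+j) (q*j + (q+1)*l)}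

/-- exponents of generators of I_n -/
def Gn (q n : ℕ) : Set (Fin 2 →₀ ℕ) :=
  {s | ∃ i j l b, i + j + l + 2*b = n ∧ s = ee (2*i+j) (q*j + (q+1)*l + (2*q+1)*b)}

lemma J1_eq (q : ℕ) : J1 k q = spanM k (G1 q 1) := by
  have h : G1 q 1 = {ee 2 0, ee 1 q, ee 0 (q+1)} := by
    ext s
    constructor
    · rintro ⟨i, j, l, hsum, rfl⟩
      have : (i=1∧j=0∧l=0)∨(i=0∧j=1∧l=0)∨(i=0∧j=0∧l=1) := by omega
      rcases this with ⟨rfl,rfl,rfl⟩|⟨rfl,rfl,rfl⟩|⟨rfl,rfl,rfl⟩ <;> norm_num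
    · rintro (rfl | rfl | rfl)
      · exact ⟨1, 0, 0, by norm_num, by norm_num⟩
      · exact ⟨0, 1, 0, by norm_num, by norm_num⟩
      · exact ⟨0, 0, 1, by norm_num, by norm_num⟩
  rw [h, J1, spanM, Set.image_insert_eq, Set.image_insert_eq, Set.image_singleton,
    ← mon1, ← mon2, ← mon3]

lemma G1_add (q a : ℕ) : G1 q 1 + G1 q a = G1 q (a+1) := by
  ext s
  constructor
  · rintro ⟨u, ⟨i, j, l, h1, rfl⟩, v, ⟨i', j', l', h2, rfl⟩, rfl⟩
    refine ⟨i+i', j+j', l+l', by omega, ?_⟩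
    dsimp only
    rw [ee_add]
    congr 1 <;> ring
  · rintro ⟨i, j, l, hsum, rfl⟩
    rcases Nat.lt_or_ge i 1 with hi | hi
    · rcases Nat.lt_or_ge j 1 with hj | hj
      · obtain ⟨l', rfl⟩ : ∃ l', l = l'+1 := ⟨l-1, by omega⟩
        refine ⟨ee 0 (q+1), ⟨0,0,1, by norm_num, by norm_num⟩,
          ee (2*i+j) (q*j+(q+1)*l'), ⟨i, j, l', by omega, rfl⟩, ?_⟩
        dsimp only; rw [ee_add]; congr 1 <;> ring
      · obtain ⟨j', rfl⟩ : ∃ j', j = j'+1 := ⟨j-1, by omega⟩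
        refine ⟨ee 1 q, ⟨0,1,0, by norm_num, by norm_num⟩,
          ee (2*i+j') (q*j'+(q+1)*l), ⟨i, j', l, by omega, rfl⟩, ?_⟩
        dsimp only; rw [ee_add]; congr 1 <;> ring
    · obtain ⟨i', rfl⟩ : ∃ i', i = i'+1 := ⟨i-1, by omega⟩
      refine ⟨ee 2 0, ⟨1,0,0, by norm_num, by norm_num⟩,
        ee (2*i'+j) (q*j+(q+1)*l), ⟨i', j, l, by omega, rfl⟩, ?_⟩
      dsimp only; rw [ee_add]; congr 1 <;> ring

lemma J1_pow (q a : ℕ) : J1 k q ^ a = spanM k (G1 q a) := by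
  induction a with
  | zero =>
    have h0 : G1 q 0 = {(0 : Fin 2 →₀ ℕ)} := by
      ext s
      constructor
      · rintro ⟨i, j, l, hsum, rfl⟩
        have : i = 0 ∧ j = 0 ∧ l = 0 := by omega
        rcases this with ⟨rfl, rfl, rfl⟩
        simp [ee]
      · rintro rfl
        exact ⟨0,0,0, by norm_num, by simp [ee]⟩
    rw [pow_zero, h0, spanM, Set.image_singleton, Ideal.one_eq_top]
    rw [eq_comm, Ideal.span_singleton_eq_top]
    simp [monomial_zero']
  | succ a ih =>
    rw [pow_succ, ih, mul_comm, J1_eq, spanM_mul, G1_add]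
lemma J2_pow (q b : ℕ) : J2 k q ^ b = spanM k {ee 0 ((2*q+1)*b)} := by
  rw [J2, Ideal.span_singleton_pow, ← pow_mul, spanM, Set.image_singleton, mon3]

lemma J1J2 (q a b : ℕ) : J1 k q ^ a * J2 k q ^ b =
    spanM k {s | ∃ i j l, i + j + l = a ∧ s = ee (2*i+j) (q*j + (q+1)*l + (2*q+1)*b)} := by
  rw [J1_pow, J2_pow, spanM_mul]
  congr 1
  ext s
  constructor
  · rintro ⟨u, ⟨i, j, l, h1, rfl⟩, v, rfl, rfl⟩
    exact ⟨i, j, l, h1, by dsimp only; rw [ee_add]; norm_num⟩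
  · rintro ⟨i, j, l, h1, rfl⟩
    exact ⟨ee (2*i+j) (q*j+(q+1)*l), ⟨i, j, l, h1, rfl⟩, ee 0 ((2*q+1)*b), rfl,
      by dsimp only; rw [ee_add]; norm_num⟩

lemma filtI_eq (q n : ℕ) : filtI k q n = spanM k (Gn q n) := by
  apply le_antisymm
  · apply iSup_le; intro a; apply iSup_le; intro ha
    rw [J1J2]
    apply spanM_mono
    rintro s ⟨i, j, l, h1, rfl⟩
    exact ⟨i, j, l, a.2, by omega, rfl⟩
  · rw [spanM, Ideal.span_le]
    rintro _ ⟨s, ⟨i, j, l, b, hsum, rfl⟩, rfl⟩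
    apply Submodule.mem_iSup_of_mem (⟨i+j+l, b⟩ : ℕ × ℕ)
    apply Submodule.mem_iSup_of_mem (by simpa using hsum)
    rw [J1J2]
    exact Ideal.subset_span ⟨_, ⟨i, j, l, rfl, rfl⟩, rfl⟩

lemma x2_spanM : Ideal.span {(X 0 ^ 2 : MvPolynomial (Fin 2) k)} = spanM k {ee 2 0} := by
  rw [spanM, Set.image_singleton, mon1]

lemma shift_sub (q m : ℕ) : {ee 2 0} + Gn q m ⊆ Gn q (m+1) := by
  rintro s ⟨u, rfl, v, ⟨i, j, l, b, hsum, rfl⟩, rfl⟩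
  refine ⟨i+1, j, l, b, by omega, ?_⟩
  dsimp only
  rw [ee_add]
  congr 1 <;> ring
lemma key_arith (q : ℕ) (hq : 1 ≤ q) (n D0 D1 : ℕ) :
    (∃ i j l b, i+j+l+2*b = n+2 ∧ 2*i+j ≤ D0 ∧ q*j+(q+1)*l+(2*q+1)*b ≤ D1+(2*q+1)) ↔
    (∃ i j l b, i+j+l+2*b = n ∧ 2*i+j ≤ D0 ∧ q*j+(q+1)*l+(2*q+1)*b ≤ D1) := by
  constructor
  · rintro ⟨i, j, l, b, hsum, h1, h2⟩
    rcases Nat.lt_or_ge b 1 with hb | hb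
    · -- b = 0
      obtain rfl : b = 0 := by omega
      rcases Nat.lt_or_ge l 2 with hl | hl
      · rcases Nat.lt_or_ge l 1 with hl0 | hl0
        · -- l = 0
          obtain rfl : l = 0 := by omega
          rcases Nat.lt_or_ge j 3 with hj | hj
          · -- j ≤ 2, i ≥ n
            exact ⟨n, 0, 0, 0, by omega, by omega, by omega⟩
          · -- j ≥ 3
            obtain ⟨j', rfl⟩ : ∃ j', j = j'+3 := ⟨j-3, by omega⟩
            refine ⟨i+1, j', 0, 0, by omega, by omega, ?_⟩
            have e : q*(j'+3) = q*j' + 3*q := by ring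
            simp only [e] at h2
            have : (q+1)*0 = 0 := by ring
            simp only [this, Nat.mul_zero, Nat.add_zero] at h2 ⊢
            omega
        · -- l = 1
          obtain rfl : l = 1 := by omega
          rcases Nat.lt_or_ge j 1 with hj | hj
          · -- j = 0, i = n+1
            exact ⟨n, 0, 0, 0, by omega, by omega, by omega⟩
          · obtain ⟨j', rfl⟩ : ∃ j', j = j'+1 := ⟨j-1, by omega⟩
            refine ⟨i, j', 0, 0, by omega, by omega, ?_⟩
            have e : q*(j'+1) = q*j' + q := by ring
            simp only [e, Nat.mul_one, Nat.mul_zero, Nat.add_zero] at h2 ⊢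
            omega
      · -- l ≥ 2
        obtain ⟨l', rfl⟩ : ∃ l', l = l'+2 := ⟨l-2, by omega⟩
        refine ⟨i, j, l', 0, by omega, h1, ?_⟩
        have e : (q+1)*(l'+2) = (q+1)*l' + 2*q + 2 := by ring
        simp only [e, Nat.mul_zero, Nat.add_zero] at h2 ⊢
        omega
    · obtain ⟨b', rfl⟩ : ∃ b', b = b'+1 := ⟨b-1, by omega⟩
      refine ⟨i, j, l, b', by omega, h1, ?_⟩
      have e : (2*q+1)*(b'+1) = (2*q+1)*b' + (2*q+1) := by ring
      simp only [e] at h2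
      omega
  · rintro ⟨i, j, l, b, hsum, h1, h2⟩
    refine ⟨i, j, l, b+1, by omega, h1, ?_⟩
    have e : (2*q+1)*(b+1) = (2*q+1)*b + (2*q+1) := by ring
    simp only [e]
    omega


theorem stmt_5 (q : ℕ) (hq : 1 ≤ q) (n : ℕ) (hn : 1 ≤ n) :
    (filtI k q (n + 2) ⊔ Ideal.span {X 0 ^ 2} * filtI k q (n + 1)).colon
        ((Ideal.span {X 1 ^ (2 * q + 1)} : Ideal (MvPolynomial (Fin 2) k)) :
          Set (MvPolynomial (Fin 2) k)) =
      filtI k q n ⊔ Ideal.span {X 0 ^ 2} * filtI k q (n - 1) := by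
  have collapse : ∀ m : ℕ, filtI k q (m+1) ⊔
      Ideal.span {X 0 ^ 2} * filtI k q m = spanM k (Gn q (m+1)) := by
    intro m
    rw [filtI_eq, filtI_eq, x2_spanM, spanM_mul]
    exact sup_eq_left.mpr ((spanM_mono (shift_sub q m)))
  obtain ⟨n', rfl⟩ : ∃ n', n = n'+1 := ⟨n-1, by omega⟩
  have hL : filtI k q (n'+1+2) ⊔ Ideal.span {X 0 ^ 2} * filtI k q (n'+1+1) =
      spanM k (Gn q (n'+3)) := collapse (n'+2)
  rw [hL]
  rw [show n'+1-1 = n' from rfl, collapse n']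
  ext p
  rw [Ideal.mem_colon_span_singleton, mon3, mem_spanM, mem_spanM]
  have hsup : (p * monomial (ee 0 (2*q+1)) (1:k)).support
      = p.support.map (addRightEmbedding (ee 0 (2*q+1))) := support_mul_mon p _
  rw [hsup]
  simp only [Finset.mem_map, addRightEmbedding_apply]
  constructor
  · intro H d hd
    obtain ⟨s, hs, hle⟩ := H (d + ee 0 (2*q+1)) ⟨d, hd, rfl⟩
    obtain ⟨i, j, l, b, hsum, rfl⟩ := hs
    rw [ee_le] at hle
    simp only [Finsupp.add_apply, ee_apply0, ee_apply1] at hle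
    have := (key_arith q hq (n'+1) (d 0) (d 1)).mp
      ⟨i, j, l, b, by omega, hle.1, by omega⟩
    obtain ⟨i', j', l', b', hsum', h1', h2'⟩ := this
    exact ⟨ee (2*i'+j') (q*j'+(q+1)*l'+(2*q+1)*b'), ⟨i', j', l', b', hsum', rfl⟩,
      (ee_le _ _ _).mpr ⟨h1', h2'⟩⟩
  · rintro H _ ⟨d, hd, rfl⟩
    obtain ⟨s, hs, hle⟩ := H d hd
    obtain ⟨i, j, l, b, hsum, rfl⟩ := hs
    rw [ee_le] at hle
    refine ⟨ee (2*i+j) (q*j+(q+1)*l+(2*q+1)*(b+1)), ⟨i, j, l, b+1, by omega, rfl⟩, ?_⟩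
    rw [ee_le]
    simp only [Finsupp.add_apply, ee_apply0, ee_apply1]
    have e : (2*q+1)*(b+1) = (2*q+1)*b + (2*q+1) := by ring
    rw [e]
    omega
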